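/- Let X be a real Hilbert space and let A : X ⇉ X be maximally monotone. If (x, x*) ∈ X × X satisfies sup_{γ>0} C_{A,γ}(x,x*) < +∞, then x belongs to the closure of dom A and x* belongs to the closure of ran A; that is, dom sup_{γ>0} C_{A,γ} ⊆ closure(dom A) × closure(ran A). -/

import Mathlib

open scoped RealInnerProductSpace

/-- A set-valued operator `A : X ⇉ X` is maximally monotone. -/
def IsMaxMonotone {X : Type*} [NormedAddCommGroup X] [InnerProductSpace ℝ X]
    (A : X → Set X) : Prop :=
  (∀ a as b bs, as ∈ A a → bs ∈ A b → 0 ≤ ⟪a - b, as - bs⟫) ∧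
  (∀ z zs, (∀ a as, as ∈ A a → 0 ≤ ⟪z - a, zs - as⟫) → zs ∈ A z)

/-- `J` is the resolvent `J_{γA} = (Id + γA)⁻¹`:
`J z = p` if and only if `z ∈ p + γ A p`, i.e. `γ⁻¹ • (z - p) ∈ A p`. -/
def IsResolvent {X : Type*} [NormedAddCommGroup X] [InnerProductSpace ℝ X]
    (A : X → Set X) (γ : ℝ) (J : X → X) : Prop :=
  ∀ z p, J z = p ↔ γ⁻¹ • (z - p) ∈ A p

theorem stmt_15 {X : Type*} [NormedAddCommGroup X] [InnerProductSpace ℝ X] [CompleteSpace X]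
    (A : X → Set X) (hA : IsMaxMonotone A) (x xs : X)
    (J : ℝ → X → X) (hJ : ∀ γ : ℝ, 0 < γ → IsResolvent A γ (J γ))
    (hbdd : (⨆ (γ : ℝ) (_ : 0 < γ),
        ((‖x - J γ (x + γ • xs)‖ ^ 2 / γ : ℝ) : EReal)) < ⊤) :
    x ∈ closure {z : X | (A z).Nonempty} ∧ xs ∈ closure {v : X | ∃ z, v ∈ A z} := by
  set S := (⨆ (γ : ℝ) (_ : 0 < γ),
      ((‖x - J γ (x + γ • xs)‖ ^ 2 / γ : ℝ) : EReal)) with hS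
  set M := S.toReal with hMdef
  have hle : ∀ γ : ℝ, 0 < γ → ‖x - J γ (x + γ • xs)‖ ^ 2 / γ ≤ M := by
    intro γ hγ
    have h1 : ((‖x - J γ (x + γ • xs)‖ ^ 2 / γ : ℝ) : EReal) ≤ S :=
      le_iSup₂ (f := fun (γ : ℝ) (_ : 0 < γ) =>
        ((‖x - J γ (x + γ • xs)‖ ^ 2 / γ : ℝ) : EReal)) γ hγ
    have h2 : S ≤ (M : EReal) := EReal.le_coe_toReal hbdd.ne
    exact_mod_cast h1.trans h2
  have hM0 : 0 ≤ M := by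
    have := hle 1 one_pos
    have h0 : (0:ℝ) ≤ ‖x - J 1 (x + (1:ℝ) • xs)‖ ^ 2 / 1 := by positivity
    linarith
  have hsq : ∀ γ : ℝ, 0 < γ → ‖x - J γ (x + γ • xs)‖ ^ 2 ≤ M * γ := by
    intro γ hγ
    have := hle γ hγ
    rw [div_le_iff₀ hγ] at this
    linarith
  have hmem : ∀ γ : ℝ, 0 < γ →
      γ⁻¹ • (x + γ • xs - J γ (x + γ • xs)) ∈ A (J γ (x + γ • xs)) := by
    intro γ hγ
    exact ((hJ γ hγ) (x + γ • xs) (J γ (x + γ • xs))).mp rfl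
  constructor
  · rw [Metric.mem_closure_iff]
    intro ε hε
    set γ : ℝ := ε ^ 2 / (2 * (M + 1)) with hγdef
    have hγ : 0 < γ := by positivity
    refine ⟨J γ (x + γ • xs), ⟨_, hmem γ hγ⟩, ?_⟩
    have h1 : ‖x - J γ (x + γ • xs)‖ ^ 2 ≤ M * γ := hsq γ hγ
    have h2 : M * γ < ε ^ 2 := by
      have hk : (2 * (M + 1)) * γ = ε ^ 2 := by
        rw [hγdef]; field_simp
      nlinarith
    rw [dist_eq_norm]
    nlinarith [norm_nonneg (x - J γ (x + γ • xs))]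
  · rw [Metric.mem_closure_iff]
    intro ε hε
    set γ : ℝ := (M + 1) / ε ^ 2 with hγdef
    have hγ : 0 < γ := by positivity
    set p := J γ (x + γ • xs) with hp
    refine ⟨γ⁻¹ • (x + γ • xs - p), ⟨p, hmem γ hγ⟩, ?_⟩
    have hid : γ⁻¹ • (x + γ • xs - p) - xs = γ⁻¹ • (x - p) := by
      rw [smul_sub, smul_add, smul_smul, inv_mul_cancel₀ hγ.ne', one_smul, smul_sub]
      abel
    have h1 : ‖x - p‖ ^ 2 ≤ M * γ := hsq γ hγ
    have h2 : M * γ < (ε * γ) ^ 2 := by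
      have hεγ : ε ^ 2 * γ = M + 1 := by
        rw [hγdef]; field_simp
      nlinarith
    have h3 : ‖x - p‖ < ε * γ := by
      nlinarith [norm_nonneg (x - p), mul_pos hε hγ]
    have : dist xs (γ⁻¹ • (x + γ • xs - p)) = γ⁻¹ * ‖x - p‖ := by
      rw [dist_comm, dist_eq_norm, hid, norm_smul, Real.norm_eq_abs,
        abs_of_pos (inv_pos.mpr hγ)]
    rw [this]
    rw [inv_mul_lt_iff₀ hγ] at *
    linarith [h3]
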